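/- There do not exist a positive definite symmetric 3×3 real matrix A, a real number ρ₀, and a nonzero vector h ∈ ℝ³ such that (8πρ₀ / (3 (det A)^{2/3}) + (2/det A) hᵀAh − 1) · A = (4/det A) (Ah)(Ah)ᵀ. (Consequently there are no Bianchi I solutions of the Einstein equations coupled to a radiation fluid and a nonzero homogeneous source-free magnetic field with a conformal gauge singularity: the Fuchsian condition for that system would force the equation above, whose right-hand side is a nonzero matrix of rank one while the left-hand side has rank zero or three.) -/

import Mathlib

open MeasureTheory Matrix Real Filter Topology Set Asymptotics

noncomputable section

/-- 3×3 real matrices; symmetric ones form `Sym3`, encoded via `Matrix.IsSymm`/`Matrix.PosDef`. -/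
abbrev Mat3 := Matrix (Fin 3) (Fin 3) ℝ

/-- vectors in ℝ³ -/
abbrev Vec3 := Fin 3 → ℝ

/-- Euclidean norm on ℝ³. -/
def enorm3 (p : Vec3) : ℝ := Real.sqrt (∑ i, p i ^ 2)

/-- the quadratic form pᵀBp. -/
def quadForm (B : Mat3) (p : Vec3) : ℝ := p ⬝ᵥ B.mulVec p

/-- Ψ(B)_{ij} = 4π (det B)^{1/2} ∫ (pᵀBp)^{−1/2} p_i p_j f(p) dp. -/
def PsiM (f : Vec3 → ℝ) (B : Mat3) : Mat3 :=
  Matrix.of fun i j =>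
    (4 * π) * Real.sqrt B.det * ∫ p : Vec3, (Real.sqrt (quadForm B p))⁻¹ * (p i * p j * f p)

/-- χ_b(k)_{ij} = 4π (det b)^{1/2} ∫ (pᵀbp)^{−3/2} ((bp)ᵀ k (bp)) p_i p_j f(p) dp. -/
def chiM (f : Vec3 → ℝ) (b : Mat3) (k : Mat3) : Mat3 :=
  Matrix.of fun i j =>
    (4 * π) * Real.sqrt b.det *
      ∫ p : Vec3, ((Real.sqrt (quadForm b p))⁻¹ ^ 3) * (quadForm k (b.mulVec p) * (p i * p j * f p))

/-- With u = ah, w = kh, α = hᵀah and b = a⁻¹: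
M_a(k) = (2/det a)((hᵀkh) a + α k − 2(u wᵀ + w uᵀ) + tr(bk)(2 u uᵀ − α a)). -/
def MM (a : Mat3) (h : Vec3) (k : Mat3) : Mat3 :=
  (2 / a.det) • ((h ⬝ᵥ k.mulVec h) • a + (h ⬝ᵥ a.mulVec h) • k
    - (2:ℝ) • (vecMulVec (a.mulVec h) (k.mulVec h) + vecMulVec (k.mulVec h) (a.mulVec h))
    + (a⁻¹ * k).trace • ((2:ℝ) • vecMulVec (a.mulVec h) (a.mulVec h) - (h ⬝ᵥ a.mulVec h) • a))

/-- The Fuchsian condition at B (with A = B⁻¹):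
2Ψ(B) = A − (2/det A)((hᵀAh) A − 2 (Ah)(Ah)ᵀ). -/
def FuchsCond (f : Vec3 → ℝ) (h : Vec3) (B : Mat3) : Prop :=
  (2:ℝ) • PsiM f B =
    B⁻¹ - (2 / (B⁻¹).det) •
      ((h ⬝ᵥ (B⁻¹).mulVec h) • B⁻¹ - (2:ℝ) • vecMulVec ((B⁻¹).mulVec h) ((B⁻¹).mulVec h))

/-- F(B) = 16π ∫ (pᵀBp)^{1/2} f dp + 2 (det B)^{−1/2} + 4 (det B)^{1/2} hᵀB⁻¹h. -/
def Ffun (f : Vec3 → ℝ) (h : Vec3) (B : Mat3) : ℝ :=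
  16 * π * (∫ p : Vec3, Real.sqrt (quadForm B p) * f p)
    + 2 * (Real.sqrt B.det)⁻¹ + 4 * Real.sqrt B.det * (h ⬝ᵥ (B⁻¹).mulVec h)

/-- no positive definite A, ρ₀ ∈ ℝ and nonzero h satisfy the radiation-fluid
Fuchsian condition; hence no Bianchi I radiation-fluid solutions with nonzero magnetic
field and a conformal gauge singularity. -/
theorem no_radiation_fluid_with_magnetic_field :
    ¬ ∃ (A : Mat3) (ρ₀ : ℝ) (h : Vec3), A.PosDef ∧ h ≠ 0 ∧
      (8 * π * ρ₀ / (3 * A.det ^ ((2:ℝ)/3)) + (2 / A.det) * (h ⬝ᵥ A.mulVec h) - 1) • A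
        = (4 / A.det) • vecMulVec (A.mulVec h) (A.mulVec h) := by
  rintro ⟨A, ρ₀, h, hA, hh, heq⟩
  set c : ℝ := 8 * π * ρ₀ / (3 * A.det ^ ((2:ℝ)/3)) + (2 / A.det) * (h ⬝ᵥ A.mulVec h) - 1
    with hc
  have hdet : 0 < A.det := hA.det_pos
  have hu : ∃ i, A.mulVec h i ≠ 0 := by
    by_contra hcon
    push_neg at hcon
    have hpos := hA.dotProduct_mulVec_pos hh
    have : h ⬝ᵥ A.mulVec h = 0 := by
      simp [dotProduct, hcon]
    simp [this] at hpos
  -- determinant of both sides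
  have hdetrank : (vecMulVec (A.mulVec h) (A.mulVec h)).det = 0 := by
    set u := A.mulVec h
    simp only [Matrix.det_fin_three, vecMulVec_apply]
    ring
  have hdets : c ^ 3 * A.det = 0 := by
    have := congrArg Matrix.det heq
    simpa [Matrix.det_smul, hdetrank, Fin.prod_univ_three] using this
  have hc0 : c = 0 := by
    have h3 : c ^ 3 = 0 := by
      rcases mul_eq_zero.mp hdets with h' | h'
      · exact h'
      · exact absurd h' hdet.ne'
    exact pow_eq_zero_iff (by norm_num) |>.mp h3
  obtain ⟨i, hi⟩ := hu
  have := congrFun (congrFun heq i) i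
  simp only [hc0, Matrix.smul_apply, vecMulVec_apply, zero_smul, smul_eq_mul] at this
  have h4 : (4 : ℝ) / A.det ≠ 0 := div_ne_zero (by norm_num) hdet.ne'
  exact hi (by
    have h0 : (4:ℝ) / A.det * ((A *ᵥ h) i * (A *ᵥ h) i) = 0 := by
      rw [this.symm]; ring
    rcases mul_eq_zero.mp h0 with h' | h'
    · exact absurd h' h4
    · exact mul_self_eq_zero.mp h')
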